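/- Let f : ℝⁿ → ℝ be convex and L-smooth, h : ℝⁿ → ℝ convex and L_h-smooth, F = f + h, and let x* be a minimizer of F on ℝⁿ. Let 0 ≤ δ < 1/2 and consider the STM_IPS iterates: α_0 = A_0 = 0; for k ≥ 0, α_{k+1} > 0 solves A_k + α_{k+1} = 2Lα_{k+1}² with A_{k+1} = A_k + α_{k+1}; x̃⁰ = z⁰ = x⁰; x̃^{k+1} = (A_k x^k + α_{k+1} z^k)/A_{k+1}; g_{k+1}(z) = ½‖z^k − z‖₂² + α_{k+1}(f(x̃^{k+1}) + ⟨∇f(x̃^{k+1}), z − x̃^{k+1}⟩ + h(z)); ẑ^{k+1} is the unique minimizer of g_{k+1} over ℝⁿ; z^{k+1} is any point with g_{k+1}(z^{k+1}) − g_{k+1}(ẑ^{k+1}) ≤ δ‖z^k − ẑ^{k+1}‖₂²; x^{k+1} = (A_k x^k + α_{k+1} z^{k+1})/A_{k+1}. Set R_k = ‖x* − z^k‖₂, R̃_0 = R_0, R̃_{k+1} = max{R̃_k, R_{k+1}}, and δ̂ = 2√((L_h + 2L)δ/((1 − √(2δ))²·L)). Then for every N ≥ 1: A_N·(F(x^N)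 − F(x*)) ≤ ½R_0² − ½R_N² + δ̂·Σ_{k=0}^{N−1} √(k+2)·R̃_{k+1}². -/

import Mathlib

open Finset
open scoped RealInnerProductSpace

section Aux

variable {E : Type*} [NormedAddCommGroup E] [InnerProductSpace ℝ E] [CompleteSpace E]

lemma aux_line_deriv (f : E → ℝ) (hf : Differentiable ℝ f) (x v : E) (t : ℝ) :
    HasDerivAt (fun s : ℝ => f (x + s • v)) ⟪gradient f (x + t • v), v⟫ t := by
  have hline : HasDerivAt (fun s : ℝ => x + s • v) v t := by
    simpa using ((hasDerivAt_id t).smul_const v).const_add x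
  have hfd : HasFDerivAt f ((InnerProductSpace.toDual ℝ E) (gradient f (x + t • v)))
      (x + t • v) := (hf _).hasGradientAt.hasFDerivAt
  have := hfd.comp_hasDerivAt t hline
  simp only [InnerProductSpace.toDual_apply_apply] at this
  exact this

lemma aux_convex_grad (f : E → ℝ) (hc : ConvexOn ℝ Set.univ f) (hf : Differentiable ℝ f)
    (x y : E) : f x + ⟪gradient f x, y - x⟫ ≤ f y := by
  have hq : HasDerivAt (fun s : ℝ => f (x + s • (y - x))) ⟪gradient f x, y - x⟫ 0 := by
    simpa using aux_line_deriv f hf x (y - x) 0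
  have hconv : ConvexOn ℝ Set.univ (fun s : ℝ => f (x + s • (y - x))) := by
    have h2 := hc.comp_affineMap (AffineMap.lineMap x y : ℝ →ᵃ[ℝ] E)
    have he : (fun s : ℝ => f (x + s • (y - x)))
        = (f ∘ (AffineMap.lineMap x y : ℝ →ᵃ[ℝ] E)) := by
      funext s
      simp [AffineMap.lineMap_apply_module', add_comm]
    rw [he]
    simpa using h2
  have hs := hconv.le_slope_of_hasDerivAt (Set.mem_univ (0:ℝ)) (Set.mem_univ (1:ℝ))
    zero_lt_one hq
  have hsl : slope (fun s : ℝ => f (x + s • (y - x))) 0 1 = f y - f x := by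
    have h1 : x + (1:ℝ) • (y - x) = y := by rw [one_smul]; abel
    have h0 : x + (0:ℝ) • (y - x) = x := by rw [zero_smul, add_zero]
    rw [slope_def_field, h1, h0]
    simp
  rw [hsl] at hs
  linarith

lemma aux_descent (f : E → ℝ) (hf : Differentiable ℝ f) {M : ℝ}
    (hsm : ∀ x y, ‖gradient f x - gradient f y‖ ≤ M * ‖x - y‖) (x y : E) :
    f y ≤ f x + ⟪gradient f x, y - x⟫ + M / 2 * ‖y - x‖ ^ 2 := by
  set v := y - x with hv
  set w : ℝ → ℝ := fun t =>
    f x + t * ⟪gradient f x, v⟫ + M / 2 * ‖v‖ ^ 2 * t ^ 2 - f (x + t • v) with hw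
  have hd : ∀ t : ℝ, HasDerivAt w
      (⟪gradient f x, v⟫ + M / 2 * ‖v‖ ^ 2 * (2 * t) - ⟪gradient f (x + t • v), v⟫) t := by
    intro t
    have h1 := aux_line_deriv f hf x v t
    have hb : HasDerivAt (fun s : ℝ => s * ⟪gradient f x, v⟫) ⟪gradient f x, v⟫ t := by
      simpa using (hasDerivAt_id t).mul_const (⟪gradient f x, v⟫)
    have hcq : HasDerivAt (fun s : ℝ => M / 2 * ‖v‖ ^ 2 * s ^ 2)
        (M / 2 * ‖v‖ ^ 2 * (2 * t)) t := by
      have := (hasDerivAt_pow 2 t).const_mul (M / 2 * ‖v‖ ^ 2)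
      simpa [mul_assoc] using this
    exact ((hb.const_add (f x)).add hcq).sub h1
  have hwdiff : Differentiable ℝ w := fun t => (hd t).differentiableAt
  have hmono : MonotoneOn w (Set.Icc (0:ℝ) 1) := by
    apply monotoneOn_of_deriv_nonneg (convex_Icc 0 1) hwdiff.continuous.continuousOn
      (fun t _ => (hwdiff t).differentiableWithinAt)
    intro t ht
    rw [interior_Icc] at ht
    rw [(hd t).deriv]
    have ht0 : (0:ℝ) ≤ t := le_of_lt ht.1
    have h2 : ‖gradient f (x + t • v) - gradient f x‖ ≤ M * (t * ‖v‖) := by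
      have := hsm (x + t • v) x
      rwa [add_sub_cancel_left, norm_smul, Real.norm_eq_abs, abs_of_nonneg ht0] at this
    have h1 : ⟪gradient f (x + t • v) - gradient f x, v⟫
        ≤ ‖gradient f (x + t • v) - gradient f x‖ * ‖v‖ := real_inner_le_norm _ _
    have h3 := mul_le_mul_of_nonneg_right h2 (norm_nonneg v)
    have h4 : ⟪gradient f (x + t • v) - gradient f x, v⟫
        = ⟪gradient f (x + t • v), v⟫ - ⟪gradient f x, v⟫ := inner_sub_left _ _ _
    nlinarith [h1, h3, h4]
  have h01 := hmono (Set.mem_Icc.mpr ⟨le_refl 0, zero_le_one⟩)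
    (Set.mem_Icc.mpr ⟨zero_le_one, le_refl 1⟩) zero_le_one
  have hxy : x + (1:ℝ) • v = y := by rw [one_smul, hv]; abel
  have hw0 : w 0 = 0 := by simp [hw]
  have hw1 : w 1 = f x + ⟪gradient f x, v⟫ + M / 2 * ‖v‖ ^ 2 - f y := by
    have hxy2 : x + v = y := by rw [hv]; abel
    simp [hw, hxy2]
  rw [hw0, hw1] at h01
  linarith

end Aux

set_option maxHeartbeats 4000000 in
/-- Lemma F.3 (STM with Inexact Proximal Step): for the STM_IPS iterates applied to the
composite problem `min F = f + h` with `f` convex `L`-smooth and `h` convex `L_h`-smooth,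
where each proximal subproblem is solved up to relative accuracy `δ‖z^k − ẑ^{k+1}‖²` with
`0 ≤ δ < 1/2`, one has for every `N ≥ 1`
`A_N (F(x^N) − F(x*)) ≤ ½R₀² − ½R_N² + δ̂·Σ_{k<N} √(k+2)·R̃_{k+1}²`. -/
theorem stm_ips_key_inequality {n : ℕ}
    (f h : EuclideanSpace ℝ (Fin n) → ℝ) (L Lh : ℝ)
    (hL : 0 < L) (hLh : 0 < Lh)
    (hfconvex : ConvexOn ℝ Set.univ f) (hfdiff : Differentiable ℝ f)
    (hfsmooth : ∀ x y, ‖gradient f x - gradient f y‖ ≤ L * ‖x - y‖)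
    (hhconvex : ConvexOn ℝ Set.univ h) (hhdiff : Differentiable ℝ h)
    (hhsmooth : ∀ x y, ‖gradient h x - gradient h y‖ ≤ Lh * ‖x - y‖)
    (F : EuclideanSpace ℝ (Fin n) → ℝ) (hF : ∀ x, F x = f x + h x)
    (xstar : EuclideanSpace ℝ (Fin n)) (hmin : ∀ x, F xstar ≤ F x)
    (δ : ℝ) (hδ0 : 0 ≤ δ) (hδ : δ < 1 / 2)
    (α A : ℕ → ℝ) (hα0 : α 0 = 0) (hA0 : A 0 = 0)
    (hαpos : ∀ k, 0 < α (k + 1))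
    (hαeq : ∀ k, A k + α (k + 1) = 2 * L * (α (k + 1)) ^ 2)
    (hArec : ∀ k, A (k + 1) = A k + α (k + 1))
    (x xt z zh : ℕ → EuclideanSpace ℝ (Fin n))
    (g : ℕ → EuclideanSpace ℝ (Fin n) → ℝ)
    (hxt0 : xt 0 = x 0) (hz0 : z 0 = x 0)
    (hxt : ∀ k, xt (k + 1) = (A (k + 1))⁻¹ • (A k • x k + α (k + 1) • z k))
    (hg : ∀ k w, g k w =
      (1 / 2) * ‖z k - w‖ ^ 2
        + α (k + 1) * (f (xt (k + 1)) + ⟪gradient f (xt (k + 1)), w - xt (k + 1)⟫ + h w))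
    (hzhmin : ∀ k w, g k (zh (k + 1)) ≤ g k w)
    (hz : ∀ k, g k (z (k + 1)) - g k (zh (k + 1)) ≤ δ * ‖z k - zh (k + 1)‖ ^ 2)
    (hx : ∀ k, x (k + 1) = (A (k + 1))⁻¹ • (A k • x k + α (k + 1) • z (k + 1)))
    (R Rt : ℕ → ℝ)
    (hR : ∀ k, R k = ‖xstar - z k‖)
    (hRt0 : Rt 0 = R 0)
    (hRtS : ∀ k, Rt (k + 1) = max (Rt k) (R (k + 1)))
    (δh : ℝ)
    (hδh : δh = 2 * Real.sqrt ((Lh + 2 * L) * δ / ((1 - Real.sqrt (2 * δ)) ^ 2 * L))) :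
    ∀ N : ℕ, 1 ≤ N →
      A N * (F (x N) - F xstar) ≤
        (1 / 2) * (R 0) ^ 2 - (1 / 2) * (R N) ^ 2
          + δh * ∑ k ∈ range N, Real.sqrt ((k : ℝ) + 2) * (Rt (k + 1)) ^ 2 := by
  -- basic facts about δ
  have hsq2δ : Real.sqrt (2 * δ) < 1 := by
    have h1 : Real.sqrt (2 * δ) < Real.sqrt 1 := Real.sqrt_lt_sqrt (by linarith) (by linarith)
    simpa using h1
  have hcpos : 0 < 1 - Real.sqrt (2 * δ) := by linarith
  -- rewrite δh in a convenient form
  have hδh2 : δh = 2 / (1 - Real.sqrt (2 * δ)) * Real.sqrt ((Lh + 2 * L) * δ / L) := by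
    rw [hδh]
    have he : (Lh + 2 * L) * δ / ((1 - Real.sqrt (2 * δ)) ^ 2 * L)
        = ((Lh + 2 * L) * δ / L) / (1 - Real.sqrt (2 * δ)) ^ 2 := by
      rw [div_div]; ring_nf
    rw [he, Real.sqrt_div (by positivity) ((1 - Real.sqrt (2 * δ)) ^ 2),
      Real.sqrt_sq hcpos.le]
    ring
  -- A is nonnegative and grows at most quadratically
  have hkey : ∀ k : ℕ, 0 ≤ A k ∧ A k ≤ ((k : ℝ) + 1) ^ 2 / (2 * L) := by
    intro k
    induction k with
    | zero =>
      refine ⟨hA0.ge, ?_⟩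
      rw [hA0]; positivity
    | succ k ih =>
      obtain ⟨h0, h1⟩ := ih
      have hα := hαpos k
      have heq := hαeq k
      have hαle1 : α (k + 1) ≤ ((k : ℝ) + 2) / (2 * L) := by
        by_contra hcon
        push_neg at hcon
        have hc1 : (k : ℝ) + 2 < α (k + 1) * (2 * L) := by
          rw [div_lt_iff₀ (by positivity)] at hcon; exact hcon
        have h1' : A k * (2 * L) ≤ ((k : ℝ) + 1) ^ 2 := by
          rw [le_div_iff₀ (by positivity)] at h1; exact h1
        have hky : 0 < 2 * L * α (k + 1) - ((k : ℝ) + 2) := by linarith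
        have hk0 : (0:ℝ) ≤ (k : ℝ) := Nat.cast_nonneg k
        have hky2 : 0 < 2 * L * α (k + 1) + ((k : ℝ) + 2) - 1 := by nlinarith
        have heq2 : A k * (2 * L) = 4 * L ^ 2 * α (k + 1) ^ 2 - 2 * L * α (k + 1) := by
          linear_combination (2 * L) * heq
        linarith [mul_pos hky hky2, heq2, h1', hk0]
      constructor
      · rw [hArec]; linarith
      · rw [hArec]
        push_cast
        rw [le_div_iff₀ (by positivity : (0:ℝ) < 2 * L)]
        have ha' : α (k + 1) * (2 * L) ≤ ((k : ℝ) + 2) := by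
          rw [le_div_iff₀ (by positivity)] at hαle1; exact hαle1
        have h1' : A k * (2 * L) ≤ ((k : ℝ) + 1) ^ 2 := by
          rw [le_div_iff₀ (by positivity)] at h1; exact h1
        have hk0 : (0:ℝ) ≤ (k : ℝ) := Nat.cast_nonneg k
        nlinarith [ha', h1', hk0, sq_nonneg ((k:ℝ)+1)]
  have hαle : ∀ k : ℕ, α (k + 1) ≤ ((k : ℝ) + 2) / (2 * L) := by
    intro k
    obtain ⟨h0, h1⟩ := hkey k
    have hα := hαpos k
    have heq := hαeq k
    by_contra hcon
    push_neg at hcon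
    have hc1 : (k : ℝ) + 2 < α (k + 1) * (2 * L) := by
      rw [div_lt_iff₀ (by positivity)] at hcon; exact hcon
    have h1' : A k * (2 * L) ≤ ((k : ℝ) + 1) ^ 2 := by
      rw [le_div_iff₀ (by positivity)] at h1; exact h1
    have hky : 0 < 2 * L * α (k + 1) - ((k : ℝ) + 2) := by linarith
    have hk0 : (0:ℝ) ≤ (k : ℝ) := Nat.cast_nonneg k
    have hky2 : 0 < 2 * L * α (k + 1) + ((k : ℝ) + 2) - 1 := by nlinarith
    have heq2 : A k * (2 * L) = 4 * L ^ 2 * α (k + 1) ^ 2 - 2 * L * α (k + 1) := by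
      linear_combination (2 * L) * heq
    linarith [mul_pos hky hky2, heq2, h1', hk0]
  -- facts about R and Rt
  have hRnn : ∀ k, 0 ≤ R k := by intro k; rw [hR]; positivity
  have hRtR : ∀ k, R k ≤ Rt k := by
    intro k
    cases k with
    | zero => rw [hRt0]
    | succ m => rw [hRtS]; exact le_max_right _ _
  have hRtmono : ∀ k, Rt k ≤ Rt (k + 1) := fun k => by rw [hRtS]; exact le_max_left _ _
  have hRtnn : ∀ k, 0 ≤ Rt k := fun k => le_trans (hRnn k) (hRtR k)
  -- quadratic expansion identity
  have hquad : ∀ p q r : EuclideanSpace ℝ (Fin n),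
      ‖p - r‖ ^ 2 = ‖p - q‖ ^ 2 + 2 * ⟪q - p, r - q⟫ + ‖r - q‖ ^ 2 := by
    intro p q r
    have h1 : p - r = (p - q) - (r - q) := by abel
    rw [h1, norm_sub_sq_real]
    have h2 : ⟪q - p, r - q⟫ = -⟪p - q, r - q⟫ := by
      rw [← neg_sub p q, inner_neg_left]
    rw [h2]; ring
  -- the key one-step estimate
  have step : ∀ k : ℕ, A (k + 1) * F (x (k + 1)) ≤ A k * F (x k) + α (k + 1) * F xstar
      + 1 / 2 * (R k) ^ 2 - 1 / 2 * (R (k + 1)) ^ 2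
      + δh * (Real.sqrt ((k : ℝ) + 2) * (Rt (k + 1)) ^ 2) := by
    intro k
    have hAknn : 0 ≤ A k := (hkey k).1
    have hApos : 0 < A (k + 1) := by
      rw [hArec]; have := hαpos k; linarith
    have haneq : A (k + 1) ≠ 0 := ne_of_gt hApos
    have hanb : 0 < α (k + 1) := hαpos k
    have hA2 : A (k + 1) = 2 * L * (α (k + 1)) ^ 2 := by rw [hArec]; exact hαeq k
    -- vector identities
    have hxt1 : A (k + 1) • xt (k + 1) = A k • x k + α (k + 1) • z k := by
      rw [hxt k, smul_inv_smul₀ haneq]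
    have hdiff : x (k + 1) - xt (k + 1)
        = ((A (k + 1))⁻¹ * α (k + 1)) • (z (k + 1) - z k) := by
      rw [hx k, hxt k, ← smul_sub, add_sub_add_left_eq_sub, ← smul_sub, smul_smul]
    -- descent lemma for f at xt (k+1)
    have hfd := aux_descent f hfdiff hfsmooth (xt (k + 1)) (x (k + 1))
    rw [hdiff, real_inner_smul_right, norm_smul, mul_pow, Real.norm_eq_abs, sq_abs] at hfd
    have h2' := mul_le_mul_of_nonneg_left hfd hApos.le
    have e2 : A (k + 1) * (f (xt (k + 1))
        + (A (k + 1))⁻¹ * α (k + 1) * ⟪gradient f (xt (k + 1)), z (k + 1) - z k⟫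
        + L / 2 * (((A (k + 1))⁻¹ * α (k + 1)) ^ 2 * ‖z (k + 1) - z k‖ ^ 2))
        = A (k + 1) * f (xt (k + 1))
          + α (k + 1) * ⟪gradient f (xt (k + 1)), z (k + 1) - z k⟫
          + 1 / 4 * ‖z (k + 1) - z k‖ ^ 2 := by
      have key : ∀ fx q s : ℝ, (2 * L * α (k + 1) ^ 2)
          * (fx + (2 * L * α (k + 1) ^ 2)⁻¹ * α (k + 1) * q
            + L / 2 * (((2 * L * α (k + 1) ^ 2)⁻¹ * α (k + 1)) ^ 2 * s))
          = (2 * L * α (k + 1) ^ 2) * fx + α (k + 1) * q + 1 / 4 * s := by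
        intro fx q s
        have hα0' : α (k + 1) ≠ 0 := ne_of_gt hanb
        have hL0 : L ≠ 0 := ne_of_gt hL
        field_simp
        ring
      rw [hA2]
      exact key _ _ _
    -- convexity of f from xt (k+1) towards x k
    have h3 := mul_le_mul_of_nonneg_left
      (aux_convex_grad f hfconvex hfdiff (xt (k + 1)) (x k)) hAknn
    -- inner product bookkeeping
    have keyi : A k * ⟪gradient f (xt (k + 1)), xt (k + 1)⟫
        + α (k + 1) * ⟪gradient f (xt (k + 1)), xt (k + 1)⟫
        = A k * ⟪gradient f (xt (k + 1)), x k⟫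
          + α (k + 1) * ⟪gradient f (xt (k + 1)), z k⟫ := by
      have hsum : A k • xt (k + 1) + α (k + 1) • xt (k + 1)
          = A k • x k + α (k + 1) • z k := by
        rw [← add_smul, ← hArec]; exact hxt1
      have h' := congrArg (fun w => ⟪gradient f (xt (k + 1)), w⟫) hsum
      simp only [inner_add_right, real_inner_smul_right] at h'
      exact h'
    have i1 : α (k + 1) * ⟪gradient f (xt (k + 1)), z (k + 1) - z k⟫
        = α (k + 1) * ⟪gradient f (xt (k + 1)), z (k + 1)⟫
          - α (k + 1) * ⟪gradient f (xt (k + 1)), z k⟫ := by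
      rw [inner_sub_right]; ring
    have i2 : A k * ⟪gradient f (xt (k + 1)), x k - xt (k + 1)⟫
        = A k * ⟪gradient f (xt (k + 1)), x k⟫
          - A k * ⟪gradient f (xt (k + 1)), xt (k + 1)⟫ := by
      rw [inner_sub_right]; ring
    have i3 : α (k + 1) * ⟪gradient f (xt (k + 1)), z (k + 1) - xt (k + 1)⟫
        = α (k + 1) * ⟪gradient f (xt (k + 1)), z (k + 1)⟫
          - α (k + 1) * ⟪gradient f (xt (k + 1)), xt (k + 1)⟫ := by
      rw [inner_sub_right]; ring
    -- convex combination bound for h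
    have hxcomb : x (k + 1)
        = (A k / A (k + 1)) • x k + (α (k + 1) / A (k + 1)) • z (k + 1) := by
      rw [hx k, smul_add, smul_smul, smul_smul, div_eq_inv_mul, div_eq_inv_mul]
    have hhc := hhconvex.2 (Set.mem_univ (x k)) (Set.mem_univ (z (k + 1)))
      (div_nonneg hAknn hApos.le) (div_nonneg hanb.le hApos.le)
      (by rw [← add_div, ← hArec, div_self haneq])
    rw [← hxcomb] at hhc
    simp only [smul_eq_mul] at hhc
    have h5' : A (k + 1) * h (x (k + 1)) ≤ A k * h (x k) + α (k + 1) * h (z (k + 1)) := by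
      have hm := mul_le_mul_of_nonneg_left hhc hApos.le
      have e : A (k + 1) * (A k / A (k + 1) * h (x k) + α (k + 1) / A (k + 1) * h (z (k + 1)))
          = A k * h (x k) + α (k + 1) * h (z (k + 1)) := by
        field_simp
      linarith
    -- combine into : A_{k+1} F(x^{k+1}) ≤ A_k F(x^k) + g_k(z^{k+1})
    have hgz : g k (z (k + 1)) = 1 / 2 * ‖z k - z (k + 1)‖ ^ 2
        + α (k + 1) * f (xt (k + 1))
        + α (k + 1) * ⟪gradient f (xt (k + 1)), z (k + 1) - xt (k + 1)⟫
        + α (k + 1) * h (z (k + 1)) := by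
      rw [hg]; ring
    have hFx' : A (k + 1) * F (x (k + 1))
        = A (k + 1) * f (x (k + 1)) + A (k + 1) * h (x (k + 1)) := by rw [hF]; ring
    have hFxk : A k * F (x k) = A k * f (x k) + A k * h (x k) := by rw [hF]; ring
    have hSrev : ‖z (k + 1) - z k‖ ^ 2 = ‖z k - z (k + 1)‖ ^ 2 := by rw [norm_sub_rev]
    have hsplitA : A (k + 1) * f (xt (k + 1))
        = A k * f (xt (k + 1)) + α (k + 1) * f (xt (k + 1)) := by
      rw [hArec]; ring
    have h6 : A (k + 1) * F (x (k + 1)) ≤ A k * F (x k) + g k (z (k + 1)) := by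
      linarith [h2', e2, h3, keyi, i1, i2, i3, h5', hgz, hFx', hFxk, hSrev,
        hsplitA, sq_nonneg ‖z k - z (k + 1)‖]
    -- the (explicit) gradient of g_k at z^{k+1}
    set G := (z (k + 1) - z k)
        + α (k + 1) • (gradient f (xt (k + 1)) + gradient h (z (k + 1))) with hGdef
    have hGx : ⟪G, xstar - z (k + 1)⟫ = ⟪z (k + 1) - z k, xstar - z (k + 1)⟫
        + α (k + 1) * ⟪gradient f (xt (k + 1)), xstar - z (k + 1)⟫
        + α (k + 1) * ⟪gradient h (z (k + 1)), xstar - z (k + 1)⟫ := by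
      rw [hGdef, inner_add_left, real_inner_smul_left, inner_add_left]; ring
    have hsplitm : α (k + 1) * ⟪gradient f (xt (k + 1)), xstar - xt (k + 1)⟫
        = α (k + 1) * ⟪gradient f (xt (k + 1)), z (k + 1) - xt (k + 1)⟫
          + α (k + 1) * ⟪gradient f (xt (k + 1)), xstar - z (k + 1)⟫ := by
      rw [show xstar - xt (k + 1) = (z (k + 1) - xt (k + 1)) + (xstar - z (k + 1)) by abel,
        inner_add_right]; ring
    have hh1' := mul_le_mul_of_nonneg_left
      (aux_convex_grad h hhconvex hhdiff (z (k + 1)) xstar) hanb.le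
    have hqx := hquad (z k) (z (k + 1)) xstar
    -- strong convexity of g from z^{k+1} towards xstar
    have hstrong : g k (z (k + 1)) + ⟪G, xstar - z (k + 1)⟫
        + 1 / 2 * ‖xstar - z (k + 1)‖ ^ 2 ≤ g k xstar := by
      rw [hg k xstar, hg k (z (k + 1))]
      linarith [hh1', hqx, hGx, hsplitm]
    have hcs := (abs_le.mp (abs_real_inner_le_norm G (xstar - z (k + 1)))).1
    -- value of g at xstar
    have h9 : g k xstar ≤ 1 / 2 * (R k) ^ 2 + α (k + 1) * F xstar := by
      have hnk : ‖z k - xstar‖ = R k := by rw [hR k, norm_sub_rev]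
      have hf9 := mul_le_mul_of_nonneg_left
        (aux_convex_grad f hfconvex hfdiff (xt (k + 1)) xstar) hanb.le
      rw [hg k xstar, hnk, hF xstar]
      linarith [hf9]
    -- bound ‖G‖ using the inexactness of the proximal step
    have hMpos : 0 < 1 + α (k + 1) * Lh := by linarith [mul_pos hanb hLh]
    set u : EuclideanSpace ℝ (Fin n) := z (k + 1) - (1 + α (k + 1) * Lh)⁻¹ • G with hudef
    have huz : u - z (k + 1) = -((1 + α (k + 1) * Lh)⁻¹ • G) := by
      rw [hudef]; abel
    have hGinner : ⟪G, u - z (k + 1)⟫ = -((1 + α (k + 1) * Lh)⁻¹ * ‖G‖ ^ 2) := by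
      rw [huz, inner_neg_right, real_inner_smul_right, real_inner_self_eq_norm_sq]
    have hGnorm : ‖u - z (k + 1)‖ ^ 2 = ((1 + α (k + 1) * Lh)⁻¹) ^ 2 * ‖G‖ ^ 2 := by
      rw [huz, norm_neg, norm_smul, mul_pow, Real.norm_eq_abs, sq_abs]
    have hGu : ⟪G, u - z (k + 1)⟫ = ⟪z (k + 1) - z k, u - z (k + 1)⟫
        + α (k + 1) * ⟪gradient f (xt (k + 1)), u - z (k + 1)⟫
        + α (k + 1) * ⟪gradient h (z (k + 1)), u - z (k + 1)⟫ := by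
      rw [hGdef, inner_add_left, real_inner_smul_left, inner_add_left]; ring
    have hsplitu : α (k + 1) * ⟪gradient f (xt (k + 1)), u - xt (k + 1)⟫
        = α (k + 1) * ⟪gradient f (xt (k + 1)), z (k + 1) - xt (k + 1)⟫
          + α (k + 1) * ⟪gradient f (xt (k + 1)), u - z (k + 1)⟫ := by
      rw [show u - xt (k + 1) = (z (k + 1) - xt (k + 1)) + (u - z (k + 1)) by abel,
        inner_add_right]; ring
    have hh2' := mul_le_mul_of_nonneg_left
      (aux_descent h hhdiff hhsmooth (z (k + 1)) u) hanb.le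
    have hqu := hquad (z k) (z (k + 1)) u
    have hMeq2 : (1 / 2 + α (k + 1) * Lh / 2) * ‖u - z (k + 1)‖ ^ 2
        - (1 + α (k + 1) * Lh)⁻¹ * ‖G‖ ^ 2
        = -(1 / (2 * (1 + α (k + 1) * Lh)) * ‖G‖ ^ 2) := by
      rw [hGnorm]
      field_simp
      ring
    have hgu : g k u ≤ g k (z (k + 1)) - 1 / (2 * (1 + α (k + 1) * Lh)) * ‖G‖ ^ 2 := by
      rw [hg k u, hg k (z (k + 1))]
      linarith [hh2', hqu, hGu, hGinner, hsplitu, hMeq2]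
    have h10 : 1 / (2 * (1 + α (k + 1) * Lh)) * ‖G‖ ^ 2
        ≤ δ * ‖z k - zh (k + 1)‖ ^ 2 := by
      linarith [hzhmin k u, hz k, hgu]
    have hG2 : ‖G‖ ^ 2 ≤ 2 * (1 + α (k + 1) * Lh) * δ * ‖z k - zh (k + 1)‖ ^ 2 := by
      have hMinv2 : 2 * (1 + α (k + 1) * Lh)
          * (1 / (2 * (1 + α (k + 1) * Lh)) * ‖G‖ ^ 2) = ‖G‖ ^ 2 := by
        field_simp
      linarith [mul_le_mul_of_nonneg_left h10
        (by positivity : (0:ℝ) ≤ 2 * (1 + α (k + 1) * Lh)), hMinv2]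
    have hGle : ‖G‖ ≤ Real.sqrt (2 * (1 + α (k + 1) * Lh) * δ) * ‖z k - zh (k + 1)‖ := by
      have h1 : Real.sqrt (‖G‖ ^ 2)
          ≤ Real.sqrt (2 * (1 + α (k + 1) * Lh) * δ * ‖z k - zh (k + 1)‖ ^ 2) :=
        Real.sqrt_le_sqrt hG2
      rwa [Real.sqrt_sq (norm_nonneg G), Real.sqrt_mul (by positivity),
        Real.sqrt_sq (norm_nonneg _)] at h1
    -- ‖z^{k+1} - ẑ^{k+1}‖² ≤ 2 (g(z^{k+1}) - g(ẑ^{k+1})) by strong convexity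
    have hgap0 : 0 ≤ g k (z (k + 1)) - g k (zh (k + 1)) :=
      sub_nonneg.mpr (hzhmin k (z (k + 1)))
    have he2 : ‖z (k + 1) - zh (k + 1)‖ ^ 2 / 2
        ≤ g k (z (k + 1)) - g k (zh (k + 1)) := by
      by_contra hcon
      push_neg at hcon
      have he0 : 0 < ‖z (k + 1) - zh (k + 1)‖ ^ 2 := by
        have := sq_nonneg ‖z (k + 1) - zh (k + 1)‖
        linarith [hgap0, hcon]
      set gap := g k (z (k + 1)) - g k (zh (k + 1)) with hgapdef
      set t : ℝ := (‖z (k + 1) - zh (k + 1)‖ ^ 2 - 2 * gap)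
          / (2 * ‖z (k + 1) - zh (k + 1)‖ ^ 2) with htdef
      have ht0 : 0 < t := by
        apply div_pos
        · linarith [hcon]
        · linarith
      have ht1 : t < 1 := by
        rw [htdef, div_lt_one (by linarith)]
        linarith [hgap0]
      have htmul : t * (2 * ‖z (k + 1) - zh (k + 1)‖ ^ 2)
          = ‖z (k + 1) - zh (k + 1)‖ ^ 2 - 2 * gap := by
        rw [htdef]; exact div_mul_cancel₀ _ (ne_of_gt (by linarith))
      set m : EuclideanSpace ℝ (Fin n)
          := zh (k + 1) + t • (z (k + 1) - zh (k + 1)) with hmdef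
      have hqm : ‖z k - m‖ ^ 2 = (1 - t) * ‖z k - zh (k + 1)‖ ^ 2
          + t * ‖z k - z (k + 1)‖ ^ 2
          - t * (1 - t) * ‖z (k + 1) - zh (k + 1)‖ ^ 2 := by
        have e1 : z k - m = (z k - zh (k + 1)) - t • (z (k + 1) - zh (k + 1)) := by
          rw [hmdef]; abel
        have e2' : ‖z k - z (k + 1)‖ ^ 2 = ‖z k - zh (k + 1)‖ ^ 2
            - 2 * ⟪z k - zh (k + 1), z (k + 1) - zh (k + 1)⟫
            + ‖z (k + 1) - zh (k + 1)‖ ^ 2 := by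
          rw [show z k - z (k + 1)
            = (z k - zh (k + 1)) - (z (k + 1) - zh (k + 1)) by abel, norm_sub_sq_real]
        rw [e1, norm_sub_sq_real, real_inner_smul_right, norm_smul, mul_pow,
          Real.norm_eq_abs, sq_abs, e2']
        ring
      have hlm : α (k + 1) * ⟪gradient f (xt (k + 1)), m - xt (k + 1)⟫
          = (1 - t) * (α (k + 1) * ⟪gradient f (xt (k + 1)), zh (k + 1) - xt (k + 1)⟫)
            + t * (α (k + 1) * ⟪gradient f (xt (k + 1)), z (k + 1) - xt (k + 1)⟫) := by
        have e3 : m - xt (k + 1)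
            = (zh (k + 1) - xt (k + 1)) + t • (z (k + 1) - zh (k + 1)) := by
          rw [hmdef]; abel
        have e4 : ⟪gradient f (xt (k + 1)), z (k + 1) - zh (k + 1)⟫
            = ⟪gradient f (xt (k + 1)), z (k + 1) - xt (k + 1)⟫
              - ⟪gradient f (xt (k + 1)), zh (k + 1) - xt (k + 1)⟫ := by
          rw [← inner_sub_right]
          congr 1
          abel
        rw [e3, inner_add_right, real_inner_smul_right, e4]; ring
      have hmcomb : m = (1 - t) • zh (k + 1) + t • z (k + 1) := by
        rw [hmdef, smul_sub, sub_smul, one_smul]; abel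
      have hhm := hhconvex.2 (Set.mem_univ (zh (k + 1))) (Set.mem_univ (z (k + 1)))
        (by linarith : (0:ℝ) ≤ 1 - t) ht0.le (by ring)
      rw [← hmcomb] at hhm
      simp only [smul_eq_mul] at hhm
      have hhm' := mul_le_mul_of_nonneg_left hhm hanb.le
      have hgm : g k m ≤ (1 - t) * g k (zh (k + 1)) + t * g k (z (k + 1))
          - t * (1 - t) / 2 * ‖z (k + 1) - zh (k + 1)‖ ^ 2 := by
        rw [hg k m, hg k (zh (k + 1)), hg k (z (k + 1))]
        linarith [hqm, hlm, hhm']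
      have hmin2 := hzhmin k m
      -- t * gap ≥ t*(1-t)/2 * e², and by the choice of t this forces 2*gap ≥ e²
      have hgapt : t * gap = t * g k (z (k + 1)) - t * g k (zh (k + 1)) := by
        rw [hgapdef]; ring
      have hP : t * (1 - t) / 2 * ‖z (k + 1) - zh (k + 1)‖ ^ 2 ≤ t * gap := by
        have hh : g k (zh (k + 1)) ≤ (1 - t) * g k (zh (k + 1)) + t * g k (z (k + 1))
            - t * (1 - t) / 2 * ‖z (k + 1) - zh (k + 1)‖ ^ 2 := le_trans hmin2 hgm
        linarith [hh, hgapt]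
      have hdiv : (1 - t) / 2 * ‖z (k + 1) - zh (k + 1)‖ ^ 2 ≤ gap := by
        by_contra hdd
        push_neg at hdd
        have := mul_lt_mul_of_pos_left hdd ht0
        linarith [hP, this]
      have h1t : (1 - t) * (2 * ‖z (k + 1) - zh (k + 1)‖ ^ 2)
          = ‖z (k + 1) - zh (k + 1)‖ ^ 2 + 2 * gap := by
        linear_combination (-1 : ℝ) * htmul
      linarith [hdiv, h1t, hcon]
    have hee : ‖z (k + 1) - zh (k + 1)‖
        ≤ Real.sqrt (2 * δ) * ‖z k - zh (k + 1)‖ := by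
      have h1 : ‖z (k + 1) - zh (k + 1)‖ ^ 2 ≤ 2 * δ * ‖z k - zh (k + 1)‖ ^ 2 := by
        linarith [he2, hz k]
      have h2 := Real.sqrt_le_sqrt h1
      rwa [Real.sqrt_sq (norm_nonneg _), Real.sqrt_mul (by positivity),
        Real.sqrt_sq (norm_nonneg _)] at h2
    have htri : ‖z k - zh (k + 1)‖
        ≤ ‖z k - z (k + 1)‖ + ‖z (k + 1) - zh (k + 1)‖ := by
      rw [show z k - zh (k + 1) = (z k - z (k + 1)) + (z (k + 1) - zh (k + 1)) by abel]
      exact norm_add_le _ _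
    have hzz : ‖z k - z (k + 1)‖ ≤ R k + R (k + 1) := by
      rw [hR, hR]
      calc ‖z k - z (k + 1)‖ = ‖-(xstar - z k) + (xstar - z (k + 1))‖ := by
            congr 1; abel
        _ ≤ ‖-(xstar - z k)‖ + ‖xstar - z (k + 1)‖ := norm_add_le _ _
        _ = ‖xstar - z k‖ + ‖xstar - z (k + 1)‖ := by rw [norm_neg]
    have hRk1 : R k ≤ Rt (k + 1) := le_trans (hRtR k) (hRtmono k)
    have hRk2 : R (k + 1) ≤ Rt (k + 1) := hRtR (k + 1)
    have hcd : (1 - Real.sqrt (2 * δ)) * ‖z k - zh (k + 1)‖ ≤ 2 * Rt (k + 1) := by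
      linarith [htri, hee, hzz, hRk1, hRk2]
    -- the per-step error estimate
    have hMle : 2 * (1 + α (k + 1) * Lh) * δ
        ≤ (Lh + 2 * L) * δ / L * ((k : ℝ) + 2) := by
      have ha2L : α (k + 1) * (2 * L) ≤ (k : ℝ) + 2 := by
        have := hαle k
        rw [le_div_iff₀ (by positivity)] at this
        exact this
      rw [div_mul_eq_mul_div, le_div_iff₀ hL]
      have hkk : (1:ℝ) ≤ (k : ℝ) + 2 := by
        have := Nat.cast_nonneg (α := ℝ) k; linarith
      linarith [mul_le_mul_of_nonneg_right ha2L (mul_nonneg hδ0 hLh.le),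
        mul_le_mul_of_nonneg_left hkk (by positivity : (0:ℝ) ≤ 2 * δ * L)]
    have hsle : Real.sqrt (2 * (1 + α (k + 1) * Lh) * δ)
        ≤ Real.sqrt ((Lh + 2 * L) * δ / L) * Real.sqrt ((k : ℝ) + 2) := by
      have := Real.sqrt_le_sqrt hMle
      rwa [Real.sqrt_mul (by positivity) ((k : ℝ) + 2)] at this
    have herr : ‖G‖ * R (k + 1)
        ≤ δh * (Real.sqrt ((k : ℝ) + 2) * (Rt (k + 1)) ^ 2) := by
      have hDnn : (0:ℝ) ≤ ‖z k - zh (k + 1)‖ := norm_nonneg _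
      have hRt1 : 0 ≤ Rt (k + 1) := hRtnn _
      have hDle : ‖z k - zh (k + 1)‖
          ≤ 2 * Rt (k + 1) / (1 - Real.sqrt (2 * δ)) := by
        rw [le_div_iff₀ hcpos]
        linarith [hcd]
      have s1 : ‖G‖ * R (k + 1)
          ≤ (Real.sqrt (2 * (1 + α (k + 1) * Lh) * δ) * ‖z k - zh (k + 1)‖)
            * Rt (k + 1) :=
        mul_le_mul hGle hRk2 (hRnn _) (by positivity)
      have t1 : Real.sqrt (2 * (1 + α (k + 1) * Lh) * δ) * ‖z k - zh (k + 1)‖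
          ≤ Real.sqrt (2 * (1 + α (k + 1) * Lh) * δ)
            * (2 * Rt (k + 1) / (1 - Real.sqrt (2 * δ))) :=
        mul_le_mul_of_nonneg_left hDle (Real.sqrt_nonneg _)
      have t2 : Real.sqrt (2 * (1 + α (k + 1) * Lh) * δ)
            * (2 * Rt (k + 1) / (1 - Real.sqrt (2 * δ)))
          ≤ (Real.sqrt ((Lh + 2 * L) * δ / L) * Real.sqrt ((k : ℝ) + 2))
            * (2 * Rt (k + 1) / (1 - Real.sqrt (2 * δ))) :=
        mul_le_mul_of_nonneg_right hsle (by positivity)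
      have s3 : (Real.sqrt ((Lh + 2 * L) * δ / L) * Real.sqrt ((k : ℝ) + 2))
            * (2 * Rt (k + 1) / (1 - Real.sqrt (2 * δ))) * Rt (k + 1)
          = δh * (Real.sqrt ((k : ℝ) + 2) * (Rt (k + 1)) ^ 2) := by
        rw [hδh2]
        field_simp
      have s2 := mul_le_mul_of_nonneg_right (le_trans t1 t2) hRt1
      linarith [s1, s2, le_of_eq s3, ge_of_eq s3]
    -- put the step together
    have hRprod : ‖G‖ * ‖xstar - z (k + 1)‖ = ‖G‖ * R (k + 1) := by rw [hR]
    have hRsq : ‖xstar - z (k + 1)‖ ^ 2 = (R (k + 1)) ^ 2 := by rw [hR]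
    linarith [h6, hstrong, hcs, h9, herr, le_of_eq hRprod, ge_of_eq hRprod,
      le_of_eq hRsq, ge_of_eq hRsq]
  -- telescoping
  have main : ∀ N : ℕ, A N * (F (x N) - F xstar)
      ≤ 1 / 2 * (R 0) ^ 2 - 1 / 2 * (R N) ^ 2
        + δh * ∑ k ∈ range N, Real.sqrt ((k : ℝ) + 2) * (Rt (k + 1)) ^ 2 := by
    intro N
    induction N with
    | zero => simp [hA0]
    | succ N ih =>
      have hstep := step N
      rw [Finset.sum_range_succ, mul_add]
      have hAF : A (N + 1) * F xstar = A N * F xstar + α (N + 1) * F xstar := by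
        rw [hArec]; ring
      linarith [hstep, ih, hAF]
  exact fun N _ => main N
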